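/- Let u and v be commuting nilpotent-like classes in a commutative ring (arising as u = a·h + b·l and v = h + l where h, l commute and l² = 0). Then for all nonnegative integers i, j: u^i · v^j = a^i · h^{i+j} + (i·a^{i−1}·b + j·a^i) · h^{i+j−1} · l, and consequently ∑_{i+j=m} u^i v^j = P(m)·h^m + Q(m)·h^{m−1}·l with P(m) = ∑_{i=0}^m a^i and Q(m) = ∑_{i=0}^m (i·a^{i−1}b + (m−i)a^i). -/

import Mathlib

lemma pow_lin_aux {R : Type*} [CommRing R] (l : R) (hl : l ^ 2 = 0) (x c : R) :
    ∀ n : ℕ, (x + c * l) ^ n = x ^ n + (n : R) * c * x ^ (n - 1) * l := by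
  have h2 : l * l = 0 := by rw [← sq]; exact hl
  intro n
  induction n with
  | zero => simp
  | succ m ih =>
    rw [pow_succ, ih]
    cases m with
    | zero => simp
    | succ k =>
      simp only [Nat.succ_sub_one]
      push_cast
      linear_combination (((k : R) + 1) * c ^ 2 * x ^ k) * h2

theorem stmt_19 {R : Type*} [CommRing R] (h l : R) (hl : l ^ 2 = 0) (a b : ℕ) :
    (∀ i j : ℕ, ((a : R) * h + (b : R) * l) ^ i * (h + l) ^ j
        = (a : R) ^ i * h ^ (i + j)
          + ((i : R) * (a : R) ^ (i - 1) * (b : R) + (j : R) * (a : R) ^ i) * h ^ (i + j - 1) * l) ∧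
    (∀ m : ℕ, ∑ i ∈ Finset.range (m + 1), ((a : R) * h + (b : R) * l) ^ i * (h + l) ^ (m - i)
        = (∑ i ∈ Finset.range (m + 1), (a : R) ^ i) * h ^ m
          + (∑ i ∈ Finset.range (m + 1),
              ((i : R) * (a : R) ^ (i - 1) * (b : R) + ((m - i : ℕ) : R) * (a : R) ^ i))
            * h ^ (m - 1) * l) := by
  have h2 : l * l = 0 := by rw [← sq]; exact hl
  have key : ∀ i j : ℕ, ((a : R) * h + (b : R) * l) ^ i * (h + l) ^ j
        = (a : R) ^ i * h ^ (i + j)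
          + ((i : R) * (a : R) ^ (i - 1) * (b : R) + (j : R) * (a : R) ^ i) * h ^ (i + j - 1) * l := by
    intro i j
    have e1 : ((a : R) * h + (b : R) * l) ^ i
        = ((a : R) * h) ^ i + (i : R) * (b : R) * ((a : R) * h) ^ (i - 1) * l := by
      have := pow_lin_aux l hl ((a : R) * h) (b : R) i
      linear_combination this
    have e2 : (h + l) ^ j = h ^ j + (j : R) * 1 * h ^ (j - 1) * l := by
      have := pow_lin_aux l hl h 1 j
      simpa using this
    rw [e1, e2, mul_pow, mul_pow]
    rcases Nat.eq_zero_or_pos i with hi | hi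
    · subst hi; simp
    rcases Nat.eq_zero_or_pos j with hj | hj
    · subst hj; simp; ring
    obtain ⟨i', rfl⟩ := Nat.exists_eq_succ_of_ne_zero hi.ne'
    obtain ⟨j', rfl⟩ := Nat.exists_eq_succ_of_ne_zero hj.ne'
    simp only [Nat.succ_eq_add_one, Nat.succ_sub_one, show i' + 1 + (j' + 1) = (i' + j' + 1) + 1 by ring,
      Nat.add_sub_cancel]
    push_cast
    linear_combination (((i' : R) + 1) * ((j' : R) + 1) * (b : R) * (a : R) ^ i' * h ^ i' * h ^ j') * h2
  refine ⟨key, fun m => ?_⟩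
  rw [Finset.sum_mul, Finset.sum_mul, Finset.sum_mul, ← Finset.sum_add_distrib]
  apply Finset.sum_congr rfl
  intro i hi
  have him : i ≤ m := Nat.lt_succ_iff.mp (Finset.mem_range.mp hi)
  have := key i (m - i)
  rw [Nat.add_sub_cancel' him] at this
  exact this
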